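/- Let N be a reticulation-visible network and let C be a tree node component of N. Then C consists of exactly one node if and only if C is a single-leaf component, i.e., its node set is {ℓ} for some leaf ℓ of N. -/

import Mathlib

/-!
Framework for rooted phylogenetic networks, formalized as directed graphs
given by an adjacency relation `A : V → V → Prop` on a vertex type `V`,
with a distinguished root `ρ`.  Leaves are identified with their (unique)
labels, i.e. the labelling is the identity on leaf vertices.
-/

namespace PhyloNet

variable {V : Type} {W : Type}

/-- Indegree of a vertex. -/
noncomputable def inDeg (A : V → V → Prop) (v : V) : ℕ := {u | A u v}.ncard

/-- Outdegree of a vertex. -/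
noncomputable def outDeg (A : V → V → Prop) (v : V) : ℕ := {w | A v w}.ncard

/-- `p` is a directed path (walk) from `u` to `v`, given as the list of its vertices. -/
def IsPath (A : V → V → Prop) (u v : V) (p : List V) : Prop :=
  p.Chain' A ∧ p.head? = some u ∧ p.getLast? = some v

/-- `A` with root `ρ` is a phylogenetic network: a finite rooted acyclic digraph whose
root has indegree 0 and outdegree ≥ 2, from which every node is reachable, and in which
every non-root node is either a leaf (indegree 1, outdegree 0), an internal tree node
(indegree 1, outdegree ≥ 2) or a reticulation (indegree ≥ 2, outdegree 1). -/
structure IsNetwork (A : V → V → Prop) (ρ : V) : Prop where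
  finite : Finite V
  acyclic : ∀ v, ¬ Relation.TransGen A v v
  root_indeg : inDeg A ρ = 0
  root_outdeg : 2 ≤ outDeg A ρ
  reach_from_root : ∀ v, Relation.ReflTransGen A ρ v
  degree_cond : ∀ v, v ≠ ρ →
    (inDeg A v = 1 ∧ (outDeg A v = 0 ∨ 2 ≤ outDeg A v)) ∨ (2 ≤ inDeg A v ∧ outDeg A v = 1)

/-- Reticulation node: indegree ≥ 2 and outdegree 1. -/
def IsRet (A : V → V → Prop) (v : V) : Prop := 2 ≤ inDeg A v ∧ outDeg A v = 1

/-- Leaf: indegree 1 and outdegree 0. -/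
def IsLeaf (A : V → V → Prop) (v : V) : Prop := inDeg A v = 1 ∧ outDeg A v = 0

/-- Tree node: any node that is not a reticulation node. -/
def IsTreeNode (A : V → V → Prop) (v : V) : Prop := ¬ IsRet A v

/-- `u` is visible on `v`: every directed path from the root `ρ` to `v` contains `u`. -/
def Visible (A : V → V → Prop) (ρ u v : V) : Prop := ∀ p, IsPath A ρ v p → u ∈ p

/-- A network is reticulation-visible if every reticulation node is visible on some leaf. -/
def RetVisible (A : V → V → Prop) (ρ : V) : Prop :=
  ∀ r, IsRet A r → ∃ ℓ, IsLeaf A ℓ ∧ Visible A ρ r ℓ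

/-- Undirected adjacency in the subgraph `N − R(N)` induced on tree nodes. -/
def TAdj (A : V → V → Prop) (u v : V) : Prop :=
  IsTreeNode A u ∧ IsTreeNode A v ∧ (A u v ∨ A v u)

/-- `S` is a tree node component: a connected component (ignoring directions) of the
subgraph induced on the tree nodes. -/
def IsTNC (A : V → V → Prop) (S : Set V) : Prop :=
  ∃ u, IsTreeNode A u ∧ S = {v | Relation.ReflTransGen (TAdj A) u v}

/-- `r` is the root of the tree node component `S`: it lies in `S` and has indegree 0
within `N − R(N)`, i.e. it has no tree-node parent. -/
def CompRoot (A : V → V → Prop) (S : Set V) (r : V) : Prop :=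
  r ∈ S ∧ ∀ u, IsTreeNode A u → ¬ A u r

/-- Tree node component `C'` is below tree node component `C''`. -/
def Below (A : V → V → Prop) (C' C'' : Set V) : Prop :=
  ∃ r, IsRet A r ∧ (∃ c, A r c ∧ CompRoot A C' c) ∧ (∃ p ∈ C'', A p r)

/-- A big tree node component: a tree node component with at least two nodes. -/
def BigTNC (A : V → V → Prop) (C : Set V) : Prop :=
  IsTNC A C ∧ ∃ a ∈ C, ∃ b ∈ C, a ≠ b

/-- A single-leaf component: its node set is `{ℓ}` for some leaf `ℓ`. -/
def SingleLeafTNC (A : V → V → Prop) (C : Set V) : Prop :=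
  ∃ ℓ, IsLeaf A ℓ ∧ C = {ℓ}

/-- A lowest big tree node component: a big tree node component `C` such that every
tree node component whose root is a proper descendant of the root of `C` is a
single-leaf component. -/
def LowestBig (A : V → V → Prop) (C : Set V) : Prop :=
  BigTNC A C ∧ ∀ C' r' rC, IsTNC A C' → CompRoot A C' r' → CompRoot A C rC →
    Relation.TransGen A rC r' → SingleLeafTNC A C'

/-- An inner reticulation: all of its parents lie in one and the same tree node component. -/
def InnerRet (A : V → V → Prop) (r : V) : Prop :=
  IsRet A r ∧ ∃ S, IsTNC A S ∧ ∀ p, A p r → p ∈ S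

/-- `IR(C)`: reticulations all of whose parents lie in `C`. -/
def IRset (A : V → V → Prop) (C : Set V) : Set V :=
  {r | IsRet A r ∧ ∀ p, A p r → p ∈ C}

/-- `CR(C)`: reticulations with at least one parent in `C` and at least one parent outside `C`. -/
def CRset (A : V → V → Prop) (C : Set V) : Set V :=
  {r | IsRet A r ∧ (∃ p, A p r ∧ p ∈ C) ∧ (∃ p, A p r ∧ p ∉ C)}

/-- `L_C`: the leaves of the network lying in `C` together with the children of the
inner reticulations below `C`. -/
def LCset (A : V → V → Prop) (C : Set V) : Set V :=
  {ℓ | ℓ ∈ C ∧ IsLeaf A ℓ} ∪ {x | ∃ r ∈ IRset A C, A r x}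

/-- Bicombining: every reticulation node has indegree exactly 2. -/
def Bicombining (A : V → V → Prop) : Prop := ∀ r, IsRet A r → inDeg A r = 2

/-- Galled: every reticulation node `r` has an ancestor `u` admitting two
internal-node-disjoint directed paths from `u` to `r` in which every node other
than `r` is a tree node. -/
def Galled (A : V → V → Prop) : Prop :=
  ∀ r, IsRet A r → ∃ u, Relation.TransGen A u r ∧ ∃ p₁ p₂ : List V,
    IsPath A u r p₁ ∧ IsPath A u r p₂ ∧ p₁ ≠ p₂ ∧
    (∀ x, x ∈ p₁ → x ∈ p₂ → x = u ∨ x = r) ∧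
    (∀ x ∈ p₁, x ≠ r → IsTreeNode A x) ∧ (∀ x ∈ p₂, x ≠ r → IsTreeNode A x)

/-- Restriction of a digraph to a vertex subset. -/
def Restrict (A : V → V → Prop) (S : Set V) : V → V → Prop :=
  fun a b => a ∈ S ∧ b ∈ S ∧ A a b

/-- Descendants of `u` (including `u`); the vertex set of the subnetwork `D_N(u)`. -/
def Desc (A : V → V → Prop) (u : V) : Set V := {v | Relation.ReflTransGen A u v}

/-- Binary network: the root has outdegree 2, leaves have degree 1, and every other
node has total degree 3. -/
def IsBinary (A : V → V → Prop) (ρ : V) : Prop :=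
  outDeg A ρ = 2 ∧ ∀ v, v ≠ ρ →
    (inDeg A v = 1 ∧ outDeg A v = 0) ∨ (inDeg A v = 1 ∧ outDeg A v = 2) ∨
    (inDeg A v = 2 ∧ outDeg A v = 1)

/-- A phylogenetic tree: a network with no reticulation nodes. -/
def IsPhyloTree (A : W → W → Prop) (ρ : W) : Prop :=
  IsNetwork A ρ ∧ ∀ w, ¬ IsRet A w

/-- A node with indegree 1 and outdegree 1 (a suppressible node). -/
def Deg11 (A : V → V → Prop) (v : V) : Prop := inDeg A v = 1 ∧ outDeg A v = 1

/-- There is a directed path from `a` to `b` (of length ≥ 1) all of whose internal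
nodes are suppressible. -/
def SubdivPath (A : V → V → Prop) (a b : V) : Prop :=
  ∃ p : List V, IsPath A a b p ∧ 2 ≤ p.length ∧ ∀ z ∈ p, z ≠ a → z ≠ b → Deg11 A z

/-- `φ` witnesses that the digraph `A'` on the vertex set `S` is a subdivision of the
tree `AT` restricted to the vertex set `SW`: `φ` injectively maps the tree nodes onto
the non-suppressible nodes, edges of the tree correspond exactly to directed paths
whose internal nodes are suppressible, and leaves are mapped according to the leaf
correspondence `θ` (same labels). -/
def SubdivWitness (A' : V → V → Prop) (S : Set V) (AT : W → W → Prop) (SW : Set W)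
    (θ : W → V) (φ : W → V) : Prop :=
  Set.InjOn φ SW ∧ (∀ w ∈ SW, φ w ∈ S) ∧
  (∀ x ∈ S, ¬ Deg11 (Restrict A' S) x → ∃ w ∈ SW, φ w = x) ∧
  (∀ x ∈ SW, ∀ y ∈ SW, (Restrict AT SW x y ↔ SubdivPath (Restrict A' S) (φ x) (φ y))) ∧
  (∀ w ∈ SW, outDeg (Restrict AT SW) w = 0 → φ w = θ w)

/-- The digraph `A'` on vertex set `S` is a subdivision of the tree `AT` on `SW`. -/
def IsSubdivisionOf (A' : V → V → Prop) (S : Set V) (AT : W → W → Prop) (SW : Set W)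
    (θ : W → V) : Prop :=
  ∃ φ, SubdivWitness A' S AT SW θ φ

/-- `E`, `D`, `φ` witness that the subnetwork of `A` on vertex set `S` displays the
subtree of `AT` on vertex set `SW`: `E` is a set of reticulation edges of the
subnetwork containing all but one of the incoming edges of each reticulation node of
the subnetwork, `D` is a set of deleted nodes, and `φ` witnesses that the result is a
subdivision of the subtree. -/
def DisplayWitness (A : V → V → Prop) (S : Set V) (AT : W → W → Prop) (SW : Set W)
    (θ : W → V) (E : Set (V × V)) (D : Set V) (φ : W → V) : Prop :=
  (∀ e ∈ E, Restrict A S e.1 e.2 ∧ 2 ≤ inDeg (Restrict A S) e.2) ∧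
  (∀ r ∈ S, 2 ≤ inDeg (Restrict A S) r →
     ∃ p, Restrict A S p r ∧ (p, r) ∉ E ∧ ∀ q, Restrict A S q r → q ≠ p → (q, r) ∈ E) ∧
  SubdivWitness (fun a b => Restrict A S a b ∧ (a, b) ∉ E) (S \ D) AT SW θ φ

/-- The subnetwork of `A` on vertex set `S` displays the subtree of `AT` on `SW`. -/
def DisplaysOn (A : V → V → Prop) (S : Set V) (AT : W → W → Prop) (SW : Set W)
    (θ : W → V) : Prop :=
  ∃ E D φ, DisplayWitness A S AT SW θ E D φ

/-- The leaves of the subnetwork of `A` induced on vertex set `S`. -/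
def SubLeaves (A : V → V → Prop) (S : Set V) : Set V :=
  {v | v ∈ S ∧ outDeg (Restrict A S) v = 0}

/-- `B` is a soft cluster in the subnetwork of `A` on vertex set `S`: `B` is the
cluster of some node of some phylogenetic tree displayed by that subnetwork. -/
def SoftClusterOn (A : V → V → Prop) (S : Set V) (B : Set V) : Prop :=
  ∃ (W : Type) (AT : W → W → Prop) (ρT : W) (θ : W → V),
    IsPhyloTree AT ρT ∧
    Set.BijOn θ {w | IsLeaf AT w} (SubLeaves A S) ∧
    DisplaysOn A S AT Set.univ θ ∧
    ∃ x : W, θ '' {w | IsLeaf AT w ∧ Relation.ReflTransGen AT x w} = B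

/-- `B` is a soft cluster of the node `u` of `N`: there are `E` and `D` as in the
definition of display such that `u` is a node of `(N − E) − D` and the set of leaves
of `N` below `u` in `(N − E) − D` equals `B`. -/
def SoftClusterAt (A : V → V → Prop) (u : V) (B : Set V) : Prop :=
  ∃ (E : Set (V × V)) (D : Set V),
    (∀ e ∈ E, A e.1 e.2 ∧ 2 ≤ inDeg A e.2) ∧
    (∀ r, 2 ≤ inDeg A r → ∃ p, A p r ∧ (p, r) ∉ E ∧ ∀ q, A q r → q ≠ p → (q, r) ∈ E) ∧
    (∃ (W : Type) (AT : W → W → Prop) (ρT : W) (θ : W → V),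
      IsPhyloTree AT ρT ∧ Set.BijOn θ {w | IsLeaf AT w} {v | IsLeaf A v} ∧
      IsSubdivisionOf (fun a b => A a b ∧ (a, b) ∉ E) (Set.univ \ D) AT Set.univ θ) ∧
    u ∉ D ∧
    {ℓ | IsLeaf A ℓ ∧
      Relation.ReflTransGen (fun a b => A a b ∧ (a, b) ∉ E ∧ a ∉ D ∧ b ∉ D) u ℓ} = B

/-- `w` is the lowest common ancestor of the set `X` in the (tree-like) digraph `A`. -/
def IsLCAIn (A : V → V → Prop) (X : Set V) (w : V) : Prop :=
  (∀ x ∈ X, Relation.ReflTransGen A w x) ∧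
  ∀ w', (∀ x ∈ X, Relation.ReflTransGen A w' x) → Relation.ReflTransGen A w' w

end PhyloNet

namespace PhyloNet

variable {V : Type}

private lemma getLast?_cons_of_ne_nil' {a : V} {p : List V} (hp : p ≠ []) :
    (a :: p).getLast? = p.getLast? := by
  cases p with
  | nil => exact absurd rfl hp
  | cons b t => rw [List.getLast?_cons_cons]

private lemma exists_path_rtg {A : V → V → Prop} {u v : V}
    (h : Relation.ReflTransGen A u v) : ∃ p, IsPath A u v p := by
  induction h using Relation.ReflTransGen.head_induction_on with
  | refl => exact ⟨[v], List.isChain_singleton v, rfl, rfl⟩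
  | head hab hbv ih =>
    rename_i a b
    obtain ⟨p, hc, hh, hl⟩ := ih
    have hpne : p ≠ [] := by intro h'; rw [h'] at hh; simp at hh
    refine ⟨a :: p, ?_, rfl, by rwa [getLast?_cons_of_ne_nil' hpne]⟩
    rw [List.Chain', List.isChain_cons]
    refine ⟨fun y hy => ?_, hc⟩
    rw [hh] at hy
    simp only [Option.mem_some_iff] at hy
    rw [← hy]; exact hab

private lemma rtg_last_of_mem {A : V → V → Prop} :
    ∀ (p : List V) {v z : V}, p.Chain' A → p.getLast? = some v → z ∈ p →
      Relation.ReflTransGen A z v := by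
  intro p
  induction p with
  | nil => intro v z _ _ hz; simp at hz
  | cons a t ih =>
    intro v z hc hl hz
    cases t with
    | nil =>
      simp only [List.getLast?_singleton, Option.some_inj] at hl
      simp only [List.mem_singleton] at hz
      subst hl; subst hz; exact Relation.ReflTransGen.refl
    | cons b t' =>
      rw [List.Chain', List.isChain_cons_cons] at hc
      rw [List.getLast?_cons_cons] at hl
      rcases List.mem_cons.mp hz with rfl | hz'
      · exact Relation.ReflTransGen.head hc.1 (ih hc.2 hl List.mem_cons_self)
      · exact ih hc.2 hl hz'

private lemma rtg_avoid {A : V → V → Prop} {q u v : V}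
    (h : Relation.ReflTransGen A u v)
    (hcond : ∀ z, Relation.ReflTransGen A u z → Relation.ReflTransGen A z v → z ≠ q) :
    Relation.ReflTransGen (fun a b => A a b ∧ a ≠ q ∧ b ≠ q) u v := by
  induction h with
  | refl => exact Relation.ReflTransGen.refl
  | tail hub hbc ih =>
    rename_i b c
    exact (ih (fun z h1 h2 => hcond z h1 (h2.tail hbc))).tail
      ⟨hbc, hcond b hub (Relation.ReflTransGen.single hbc),
        hcond c (hub.tail hbc) Relation.ReflTransGen.refl⟩

private lemma wf_above {A : V → V → Prop} (hfin : Finite V)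
    (hac : ∀ v, ¬ Relation.TransGen A v v) :
    WellFounded (fun a b : V => Relation.TransGen A a b) := by
  haveI := hfin
  haveI : IsTrans V (fun a b : V => Relation.TransGen A a b) :=
    ⟨fun _ _ _ h1 h2 => h1.trans h2⟩
  haveI : IsIrrefl V (fun a b : V => Relation.TransGen A a b) := ⟨hac⟩
  exact Finite.wellFounded_of_trans_of_irrefl _

/-- In a reticulation-visible network, a tree node component consists of exactly one
node if and only if it is a single-leaf component. -/
theorem single_node_component_iff_single_leaf {V : Type} (A : V → V → Prop) (ρ : V)
    (hN : IsNetwork A ρ) (hRV : RetVisible A ρ)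
    (C : Set V) (hC : IsTNC A C) :
    (∃ x, C = {x}) ↔ SingleLeafTNC A C := by
  constructor
  · rintro ⟨x, rfl⟩
    obtain ⟨u, huT, hCeq⟩ := hC
    have hux : u = x := by
      have hu' : u ∈ {v | Relation.ReflTransGen (TAdj A) u v} := Relation.ReflTransGen.refl
      rw [← hCeq] at hu'
      simpa using hu'
    subst hux
    have hxT : IsTreeNode A u := huT
    -- rename for clarity
    set x := u with hxdef
    have hmem : ∀ v, Relation.ReflTransGen (TAdj A) x v → v = x := by
      intro v hv
      have : v ∈ {v | Relation.ReflTransGen (TAdj A) x v} := hv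
      rw [← hCeq] at this
      simpa using this
    haveI hfin := hN.finite
    have hwf : WellFounded (fun a b : V => Relation.TransGen A a b) :=
      wf_above hfin hN.acyclic
    have hchild_ret : ∀ c, A x c → IsRet A c := by
      intro c hc
      by_contra hcT
      have h1 : TAdj A x c := ⟨hxT, hcT, Or.inl hc⟩
      have h2 := hmem c (Relation.ReflTransGen.single h1)
      subst h2
      exact hN.acyclic c (Relation.TransGen.single hc)
    have hpar_ret : ∀ p, A p x → IsRet A p := by
      intro p hp
      by_contra hpT
      have h1 : TAdj A x p := ⟨hxT, hpT, Or.inr hp⟩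
      have h2 := hmem p (Relation.ReflTransGen.single h1)
      subst h2
      exact hN.acyclic p (Relation.TransGen.single hp)
    have onlychild : ∀ w c c', IsRet A w → A w c → A w c' → c = c' := by
      intro w c c' hw h1 h2
      have hout : {y | A w y}.ncard = 1 := hw.2
      obtain ⟨a, ha⟩ := Set.ncard_eq_one.mp hout
      have e1 : c ∈ {y | A w y} := h1
      have e2 : c' ∈ {y | A w y} := h2
      rw [ha] at e1 e2
      simp only [Set.mem_singleton_iff] at e1 e2
      rw [e1, e2]
    have parent_other : ∀ w a, IsRet A w → ∃ b, A b w ∧ b ≠ a := by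
      intro w a hw
      have h1 : 1 < ({p | A p w}).ncard := by
        have h2 : 2 ≤ ({p | A p w}).ncard := hw.1
        omega
      obtain ⟨b, hb, hba⟩ := Set.exists_ne_of_one_lt_ncard h1 a
      exact ⟨b, hb, hba⟩
    suffices hleaf : IsLeaf A x by exact ⟨x, hleaf, rfl⟩
    by_contra hnl
    exfalso
    by_cases hxρ : x = ρ
    · -- root case: pure acyclicity contradiction
      have hQ : ∀ r, A x r → False := by
        intro r
        refine hwf.induction (C := fun r => A x r → False) r ?_
        intro r IH hr
        have hret := hchild_ret r hr
        obtain ⟨p, hpr, hpne⟩ := parent_other r x hret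
        have hreach : Relation.ReflTransGen A ρ p := hN.reach_from_root p
        rw [← hxρ] at hreach
        rcases hreach.cases_head with heq | ⟨r', hr', hrp⟩
        · exact hpne heq.symm
        · exact IH r' (Relation.TransGen.tail' hrp hpr) hr'
      have hout : 2 ≤ ({w | A ρ w}).ncard := hN.root_outdeg
      have : ({w | A ρ w}).Nonempty := Set.nonempty_of_ncard_ne_zero (by omega)
      obtain ⟨r0, hr0⟩ := this
      exact hQ r0 (hxρ ▸ hr0)
    · -- non-root case: use visibility of the reticulation parent q of x
      have hin : inDeg A x = 1 := by
        rcases hN.degree_cond x hxρ with ⟨h1, _⟩ | hret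
        · exact h1
        · exact absurd hret hxT
      have hin' : ({p | A p x}).ncard = 1 := hin
      have : ({p | A p x}).Nonempty := Set.nonempty_of_ncard_ne_zero (by omega)
      obtain ⟨q, hqx⟩ := this
      have hqret : IsRet A q := hpar_ret q hqx
      obtain ⟨ℓ, hℓleaf, hvis⟩ := hRV q hqret
      have hqnℓ : q ≠ ℓ := by
        intro h
        have h1 : ({y | A q y}).ncard = 1 := hqret.2
        have h2 : ({y | A ℓ y}).ncard = 0 := hℓleaf.2
        rw [h] at h1; omega
      have hxnℓ : x ≠ ℓ := fun h => hnl (h ▸ hℓleaf)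
      -- ℓ is strictly below x
      obtain ⟨p0, hp0⟩ := exists_path_rtg (hN.reach_from_root ℓ)
      have hqin := hvis p0 hp0
      have hqℓ : Relation.ReflTransGen A q ℓ := rtg_last_of_mem p0 hp0.1 hp0.2.2 hqin
      have hxℓ : Relation.ReflTransGen A x ℓ := by
        rcases hqℓ.cases_head with heq | ⟨c, hqc, hcl⟩
        · exact absurd heq hqnℓ
        · rwa [onlychild q c x hqret hqc hqx] at hcl
      have hTG : Relation.TransGen A x ℓ := by
        rcases hxℓ.cases_head with heq | ⟨c, hxc, hcl⟩
        · exact absurd heq hxnℓ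
        · exact Relation.TransGen.head' hxc hcl
      -- main claim: everything strictly below x is reachable from ρ avoiding q
      have claim : ∀ v, Relation.TransGen A x v →
          Relation.ReflTransGen (fun a b => A a b ∧ a ≠ q ∧ b ≠ q) ρ v := by
        intro v
        refine hwf.induction
          (C := fun v => Relation.TransGen A x v →
            Relation.ReflTransGen (fun a b => A a b ∧ a ≠ q ∧ b ≠ q) ρ v) v ?_
        intro v IH hv
        obtain ⟨r, hxr, hrv⟩ := Relation.TransGen.head'_iff.mp hv
        have hrret := hchild_ret r hxr
        have hrnx : r ≠ x := fun h => hN.acyclic x (Relation.TransGen.single (h ▸ hxr))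
        have hrnq : r ≠ q := by
          intro h
          exact hN.acyclic x ((Relation.TransGen.single hxr).tail (h ▸ hqx))
        -- the piece from r to v avoids q
        have hrv' : Relation.ReflTransGen (fun a b => A a b ∧ a ≠ q ∧ b ≠ q) r v := by
          refine rtg_avoid hrv ?_
          intro z hz _ hzq
          subst hzq
          exact hN.acyclic r (Relation.TransGen.tail' (hz.tail hqx) hxr)
        obtain ⟨p, hpr, hpnx⟩ := parent_other r x hrret
        have hpnq : p ≠ q := by
          intro h
          exact hrnx (onlychild q r x hqret (h ▸ hpr) hqx)
        have hstep : (fun a b => A a b ∧ a ≠ q ∧ b ≠ q) p r := ⟨hpr, hpnq, hrnq⟩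
        by_cases hbelow : Relation.TransGen A x p
        · exact ((IH p (Relation.TransGen.head' hpr hrv) hbelow).tail hstep).trans hrv'
        · have hρp : Relation.ReflTransGen (fun a b => A a b ∧ a ≠ q ∧ b ≠ q) ρ p := by
            refine rtg_avoid (hN.reach_from_root p) ?_
            intro z _ hz2 hzq
            rw [hzq] at hz2
            rcases hz2.cases_head with heq | ⟨c, hqc, hcp⟩
            · exact hpnq heq.symm
            · rw [onlychild q c x hqret hqc hqx] at hcp
              rcases hcp.cases_head with heq2 | ⟨c2, hxc2, hc2p⟩
              · exact hpnx heq2.symm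
              · exact hbelow (Relation.TransGen.head' hxc2 hc2p)
          exact ((hρp.tail hstep).trans hrv')
      obtain ⟨pℓ, hpℓ⟩ := exists_path_rtg (claim ℓ hTG)
      have hpA : IsPath A ρ ℓ pℓ :=
        ⟨hpℓ.1.imp (fun a b h => h.1), hpℓ.2.1, hpℓ.2.2⟩
      have hqin2 := hvis pℓ hpA
      have hfin2 : Relation.ReflTransGen (fun a b => A a b ∧ a ≠ q ∧ b ≠ q) q ℓ :=
        rtg_last_of_mem pℓ hpℓ.1 hpℓ.2.2 hqin2
      rcases hfin2.cases_head with heq | ⟨c, hc, _⟩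
      · exact hqnℓ heq
      · exact hc.2.1 rfl
  · rintro ⟨ℓ, _, hCeq⟩
    exact ⟨ℓ, hCeq⟩

end PhyloNet
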